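/- Let p be a prime, α ≥ 0, and n a positive integer not divisible by p; set m = p^α·n. Let R be a commutative ring in which every prime factor of n is invertible. Then the canonical ring homomorphism R[X]/(X^m − 1) → ∏_{d ∣ n} R[X]/(Φ_d(X)·Φ_{p·d}(X)⋯Φ_{p^α·d}(X)), induced by the quotient projections and indexed by the positive divisors d of n, is an isomorphism of rings. -/

import Mathlib

open Polynomial

private lemma expand_pow_cyclotomic {R : Type*} [CommRing R] {p : ℕ} (hp : p.Prime)
    (α : ℕ) : ∀ k : ℕ, p ∣ k →
    expand R (p ^ α) (cyclotomic k R) = cyclotomic (p ^ α * k) R := by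
  induction α with
  | zero => simp
  | succ α ih =>
    intro k hk
    have h1 : expand R (p ^ (α + 1)) (cyclotomic k R)
        = expand R (p ^ α) (expand R p (cyclotomic k R)) := by
      rw [expand_expand, ← pow_succ]
    rw [h1, cyclotomic_expand_eq_cyclotomic hp hk, ih (k * p) (hk.mul_right p)]
    congr 1
    ring

private lemma prod_cyclotomic_pow_mul {R : Type*} [CommRing R] {p : ℕ} (hp : p.Prime)
    {d : ℕ} (hd : ¬ p ∣ d) (α : ℕ) :
    ∏ i ∈ Finset.range (α + 1), cyclotomic (p ^ i * d) R
      = expand R (p ^ α) (cyclotomic d R) := by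
  induction α with
  | zero => simp
  | succ α ih =>
    have h1 : expand R (p ^ (α + 1)) (cyclotomic d R)
        = expand R (p ^ α) (expand R p (cyclotomic d R)) := by
      rw [expand_expand, ← pow_succ]
    rw [Finset.prod_range_succ, ih, h1, cyclotomic_expand_eq_cyclotomic_mul hp hd,
      map_mul, expand_pow_cyclotomic hp α (d * p) (dvd_mul_left p d), mul_comm]
    congr 2
    ring

/-- For `m = p^α · n` with `p ∤ n` and every prime factor of `n` invertible in `R`, the
canonical ring homomorphism
`R[X]/(X^m - 1) → ∏_{d ∣ n} R[X]/(Φ_d · Φ_{p·d} ⋯ Φ_{p^α·d})` is an isomorphism. -/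
theorem stmt14 {R : Type*} [CommRing R] (p : ℕ) (hp : p.Prime) (α : ℕ) (n : ℕ) (hn : 0 < n)
    (hpn : ¬ p ∣ n) (hR : ∀ q : ℕ, q.Prime → q ∣ n → IsUnit (q : R)) :
    ∃ e : (R[X] ⧸ Ideal.span {(X : R[X]) ^ (p ^ α * n) - 1}) ≃+*
        ((d : n.divisors) →
          R[X] ⧸ Ideal.span {∏ i ∈ Finset.range (α + 1), cyclotomic (p ^ i * (d : ℕ)) R}),
      ∀ (f : R[X]) (d : n.divisors),
        e (Ideal.Quotient.mk (Ideal.span {(X : R[X]) ^ (p ^ α * n) - 1}) f) d =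
          Ideal.Quotient.mk
            (Ideal.span {∏ i ∈ Finset.range (α + 1), cyclotomic (p ^ i * (d : ℕ)) R}) f := by
  classical
  set Q : n.divisors → R[X] :=
    fun d => ∏ i ∈ Finset.range (α + 1), cyclotomic (p ^ i * (d : ℕ)) R with hQ
  -- `n` is a unit in `R`
  have hunit : IsUnit (n : R) := by
    rw [← Nat.factorization_prod_pow_eq_self hn.ne', Finsupp.prod, Nat.cast_prod]
    refine Finset.prod_induction _ IsUnit (fun a b ha hb => ha.mul hb) isUnit_one ?_
    intro q hq
    rw [Nat.support_factorization] at hq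
    rw [Nat.cast_pow]
    exact (hR q (Nat.prime_of_mem_primeFactors hq) (Nat.dvd_of_mem_primeFactors hq)).pow _
  -- `X^n - 1` is separable
  have hsep : (X ^ n - 1 : R[X]).Separable := by
    have := separable_X_pow_sub_C_unit (R := R) (n := n) 1 hunit
    simpa using this
  -- cyclotomic polynomials at distinct divisors of `n` are coprime
  have hcyc : ∀ d d' : ℕ, d ∈ n.divisors → d' ∈ n.divisors → d ≠ d' →
      IsCoprime (cyclotomic d R) (cyclotomic d' R) := by
    intro d d' hd hd' hne
    have hdvd : cyclotomic d R * cyclotomic d' R ∣ (X ^ n - 1 : R[X]) := by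
      rw [← prod_cyclotomic_eq_X_pow_sub_one hn R]
      refine dvd_trans ?_
        (Finset.prod_dvd_prod_of_subset {d, d'} n.divisors (fun x => cyclotomic x R) ?_)
      · rw [Finset.prod_pair hne]
      · intro x hx
        rcases Finset.mem_insert.mp hx with rfl | hx
        · exact hd
        · rw [Finset.mem_singleton] at hx; subst hx; exact hd'
    exact (hsep.of_dvd hdvd).isCoprime
  -- each factor divides `n` and is not divisible by `p`
  have hnd : ∀ d : n.divisors, ¬ p ∣ (d : ℕ) := by
    intro d hdvd
    exact hpn (hdvd.trans (Nat.dvd_of_mem_divisors d.2))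
  have hQ' : ∀ d : n.divisors, Q d = expand R (p ^ α) (cyclotomic (d : ℕ) R) :=
    fun d => prod_cyclotomic_pow_mul hp (hnd d) α
  -- pairwise coprimality of the `Q d`
  have hcop' : ∀ (d d' : n.divisors), d ≠ d' → IsCoprime (Q d) (Q d') := by
    intro d d' hne
    rw [hQ' d, hQ' d']
    exact (hcyc d d' d.2 d'.2 (Subtype.coe_injective.ne hne)).map
      (expand R (p ^ α) : R[X] →ₐ[R] R[X]).toRingHom
  have hcop : Pairwise (Function.onFun IsCoprime fun d : n.divisors => Ideal.span {Q d}) := by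
    intro d d' hne
    exact (Ideal.isCoprime_span_singleton_iff _ _).mpr (hcop' d d' hne)
  -- the product of the `Q d` is `X^(p^α n) - 1`
  have hprod : ∏ d : n.divisors, Q d = (X : R[X]) ^ (p ^ α * n) - 1 := by
    have h2 : ∏ d : n.divisors, Q d
        = expand R (p ^ α) (∏ d ∈ n.divisors, cyclotomic d R) := by
      rw [map_prod,
        ← Finset.prod_coe_sort n.divisors (fun d => expand R (p ^ α) (cyclotomic d R))]
      exact Finset.prod_congr rfl fun d _ => hQ' d
    rw [h2, prod_cyclotomic_eq_X_pow_sub_one hn R, map_sub, map_one, map_pow, expand_X,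
      ← pow_mul]
  -- identify the ideals
  have hideal : Ideal.span {(X : R[X]) ^ (p ^ α * n) - 1}
      = ⨅ d : n.divisors, Ideal.span {Q d} := by
    rw [Ideal.iInf_span_singleton fun d d' h => hcop' d d' h, hprod]
  refine ⟨(Ideal.quotEquivOfEq hideal).trans
    (Ideal.quotientInfRingEquivPiQuotient _ hcop), fun f d => ?_⟩
  simp only [RingEquiv.coe_trans, Function.comp_apply, Ideal.quotEquivOfEq_mk]
  rfl
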